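/- arXiv:2204.01156 — 2 statements merged into one kernel-verified Lean document; each statement's English description precedes it below -/
import Mathlib

section
/- A P-TEG with characteristic matrices A^0, A^1 ∈ ℝmax^{n×n}, B^0, B^1 ∈ ℝmin^{n×n} admits a consistent 1-periodic trajectory of period λ ≥ 0 (i.e., x(k) = kλ + x(0) satisfying the LDI for all k) if and only if there exists x ∈ ℝ^n such that A^0 ⊗ x ⪯ x, x ⪯ B^0 ∧ x, A^1 ⊗ x ⪯ λ + x, and λ + x ⪯ B^1 ∧ x, which holds if and only if the precedence graph of the matrix λ·B^{1♯} ⊕ λ^{−1}·A^1 ⊕ (A^0 ⊕ B^{0♯}) contains no circuit of positive weight and has the existence of a finite potential, where M^♯ denotes −Mᵀ. -/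
noncomputable section
open Classical

/-- Max-plus matrix–vector product `(A ⊗ x)_i = max_j (A_{ij} + x_j)`. -/
def mpVec {ι : Type*} (A : Matrix ι ι EReal) (x : ι → ℝ) : ι → EReal :=
  fun i => ⨆ j, A i j + (x j : EReal)

/-- Min-plus (dual) addition: `+∞` is absorbing. -/
def dAdd (a b : EReal) : EReal := if a = ⊤ ∨ b = ⊤ then ⊤ else a + b

/-- Min-plus (dual) matrix–vector product `(B ∧ x)_i = min_j (B_{ij} + x_j)`. -/
def dpVec {ι : Type*} (B : Matrix ι ι EReal) (x : ι → ℝ) : ι → EReal :=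
  fun i => ⨅ j, dAdd (B i j) ((x j : EReal))

/-- `x` satisfies the LDI of the P-TEG for all `k ∈ ℕ₀`. -/
def SatLDI {ι : Type*} (A0 A1 B0 B1 : Matrix ι ι EReal) (x : ℕ → ι → ℝ) : Prop :=
  ∀ k : ℕ,
    (∀ i, mpVec A0 (x k) i ≤ (x k i : EReal)) ∧
    (∀ i, (x k i : EReal) ≤ dpVec B0 (x k) i) ∧
    (∀ i, mpVec A1 (x k) i ≤ (x (k + 1) i : EReal)) ∧
    (∀ i, (x (k + 1) i : EReal) ≤ dpVec B1 (x k) i)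

/-- `M^♯ = -Mᵀ` (taking `ℝmin` to `ℝmax`, since `-(+∞) = -∞` in `EReal`). -/
def sharp {ι : Type*} (M : Matrix ι ι EReal) : Matrix ι ι EReal := fun i j => - M j i

/-- The parametric matrix `λ·B¹♯ ⊕ λ⁻¹·A¹ ⊕ (A⁰ ⊕ B⁰♯)`, where `λ·`/`λ⁻¹·` add,
resp. subtract, the real scalar `λ` to every entry (leaving `-∞` fixed). -/
def Mlam {ι : Type*} (A0 A1 B0 B1 : Matrix ι ι EReal) (lam : ℝ) : Matrix ι ι EReal :=
  fun i j => ((lam : EReal) + sharp B1 i j) ⊔ ((- lam : ℝ) + A1 i j) ⊔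
    (A0 i j ⊔ sharp B0 i j)

/-- Successive nodes of a path in the precedence graph `G(M)`. -/
def IsPath {n : ℕ} (M : Matrix (Fin n) (Fin n) EReal) (r : ℕ) (p : Fin (r + 1) → Fin n) :
    Prop := ∀ t : Fin r, M (p t.castSucc) (p t.succ) ≠ ⊥

/-- The weight of a path in `G(M)`. -/
def pathWeight {n : ℕ} (M : Matrix (Fin n) (Fin n) EReal) (r : ℕ)
    (p : Fin (r + 1) → Fin n) : EReal := ∑ t : Fin r, M (p t.castSucc) (p t.succ)

/-- `G(M)` contains no circuit of positive weight. -/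
def NoPosCircuit {n : ℕ} (M : Matrix (Fin n) (Fin n) EReal) : Prop :=
  ∀ (r : ℕ), 1 ≤ r → ∀ p : Fin (r + 1) → Fin n,
    IsPath M r p → p 0 = p (Fin.last r) → pathWeight M r p ≤ 0

namespace PtegAux

lemma ecases (a : EReal) : a = ⊥ ∨ a = ⊤ ∨ ∃ r : ℝ, a = r := by
  induction a using EReal.rec with
  | bot => exact Or.inl rfl
  | coe r => exact Or.inr (Or.inr ⟨r, rfl⟩)
  | top => exact Or.inr (Or.inl rfl)

lemma dAdd_coe (r s : ℝ) : dAdd ((r : ℝ) : EReal) ((s : ℝ) : EReal) = ((r + s : ℝ) : EReal) := by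
  rw [dAdd, if_neg (not_or.2 ⟨EReal.coe_ne_top r, EReal.coe_ne_top s⟩)]
  norm_cast

/-- L1: shifting both sides by a real `c`. -/
lemma shift_iff (a : EReal) (c u v : ℝ) :
    a + ((c + u : ℝ) : EReal) ≤ ((c + v : ℝ) : EReal) ↔ a + (u : ℝ) ≤ ((v : ℝ) : EReal) := by
  rcases ecases a with h | h | ⟨r, h⟩ <;> subst h
  · simp
  · rw [EReal.top_add_coe, EReal.top_add_coe]
    exact iff_of_false (not_le.2 (EReal.coe_lt_top _)) (not_le.2 (EReal.coe_lt_top _))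
  · norm_cast; constructor <;> intro h <;> linarith

/-- L2: shifting both sides of a dAdd inequality by a real `c`. -/
lemma dshift_iff (b : EReal) (hb : b ≠ ⊥) (c u v : ℝ) :
    ((c + u : ℝ) : EReal) ≤ dAdd b ((c + v : ℝ) : EReal) ↔
      ((u : ℝ) : EReal) ≤ dAdd b ((v : ℝ) : EReal) := by
  rcases ecases b with h | h | ⟨r, h⟩ <;> subst h
  · exact absurd rfl hb
  · simp [dAdd]
  · rw [dAdd_coe, dAdd_coe]
    norm_cast; constructor <;> intro h <;> linarith

/-- L3: `u ≤ b + v ↔ -b + u ≤ v`. -/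
lemma dAdd_le_iff (b : EReal) (hb : b ≠ ⊥) (u v : ℝ) :
    ((u : ℝ) : EReal) ≤ dAdd b ((v : ℝ) : EReal) ↔ (-b) + (u : ℝ) ≤ ((v : ℝ) : EReal) := by
  rcases ecases b with h | h | ⟨r, h⟩ <;> subst h
  · exact absurd rfl hb
  · simp [dAdd]
  · rw [dAdd_coe, show -((r : ℝ) : EReal) = ((-r : ℝ) : EReal) by norm_cast]
    norm_cast; constructor <;> intro h <;> linarith

/-- L3': `l + u ≤ b + v ↔ (l + -b) + u ≤ v`. -/
lemma dAdd_le_iff' (b : EReal) (hb : b ≠ ⊥) (l u v : ℝ) :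
    ((l + u : ℝ) : EReal) ≤ dAdd b ((v : ℝ) : EReal) ↔
      ((l : EReal) + (-b)) + (u : ℝ) ≤ ((v : ℝ) : EReal) := by
  rcases ecases b with h | h | ⟨r, h⟩ <;> subst h
  · exact absurd rfl hb
  · simp [dAdd]
  · rw [dAdd_coe, show ((l : ℝ) : EReal) + -((r : ℝ) : EReal) = ((l + -r : ℝ) : EReal) by norm_cast]
    norm_cast; constructor <;> intro h <;> linarith

/-- L4: `a + u ≤ l + v ↔ (-l + a) + u ≤ v`. -/
lemma le_shift_iff (a : EReal) (l u v : ℝ) :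
    a + (u : ℝ) ≤ ((l + v : ℝ) : EReal) ↔ (((-l : ℝ) : EReal) + a) + (u : ℝ) ≤ ((v : ℝ) : EReal) := by
  rcases ecases a with h | h | ⟨r, h⟩ <;> subst h
  · simp
  · rw [EReal.top_add_coe, EReal.coe_add_top, EReal.top_add_coe]
    exact iff_of_false (not_le.2 (EReal.coe_lt_top _)) (not_le.2 (EReal.coe_lt_top _))
  · rw [show ((-l : ℝ) : EReal) + ((r : ℝ) : EReal) = ((-l + r : ℝ) : EReal) by norm_cast]
    norm_cast; constructor <;> intro h <;> linarith

/-- L5: sup splits. -/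
lemma sup_add_le_iff (a b c v : EReal) :
    (a ⊔ b) + c ≤ v ↔ a + c ≤ v ∧ b + c ≤ v := by
  constructor
  · intro h
    exact ⟨le_trans (add_le_add_left le_sup_left c) h,
      le_trans (add_le_add_left le_sup_right c) h⟩
  · rintro ⟨h1, h2⟩
    rcases le_total a b with h | h
    · rwa [sup_eq_right.2 h]
    · rwa [sup_eq_left.2 h]

end PtegAux


namespace PtegAux

lemma Mlam_add_le_iff {ι : Type*} (A0 A1 B0 B1 : Matrix ι ι EReal) (lam : ℝ)
    (i j : ι) (c v : EReal) :
    Mlam A0 A1 B0 B1 lam i j + c ≤ v ↔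
      (((lam : ℝ) : EReal) + sharp B1 i j) + c ≤ v ∧
      (((-lam : ℝ) : EReal) + A1 i j) + c ≤ v ∧
      A0 i j + c ≤ v ∧ sharp B0 i j + c ≤ v := by
  simp only [Mlam]
  rw [sup_add_le_iff, sup_add_le_iff, sup_add_le_iff, and_assoc]

variable {n : ℕ}

lemma static_iff_E (A0 A1 B0 B1 : Matrix (Fin n) (Fin n) EReal)
    (hB : ∀ i j, B0 i j ≠ ⊥ ∧ B1 i j ≠ ⊥) (lam : ℝ) (x : Fin n → ℝ) :
    ((∀ i, mpVec A0 x i ≤ (x i : EReal)) ∧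
     (∀ i, (x i : EReal) ≤ dpVec B0 x i) ∧
     (∀ i, mpVec A1 x i ≤ ((lam + x i : ℝ) : EReal)) ∧
     (∀ i, ((lam + x i : ℝ) : EReal) ≤ dpVec B1 x i)) ↔
    ∀ i, mpVec (Mlam A0 A1 B0 B1 lam) x i ≤ (x i : EReal) := by
  simp only [mpVec, dpVec, iSup_le_iff, le_iInf_iff]
  constructor
  · rintro ⟨h1, h2, h3, h4⟩ i j
    rw [Mlam_add_le_iff]
    refine ⟨?_, ?_, h1 i j, ?_⟩
    · exact (dAdd_le_iff' (B1 j i) (hB j i).2 lam (x j) (x i)).1 (h4 j i)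
    · exact (le_shift_iff (A1 i j) lam (x j) (x i)).1 (h3 i j)
    · exact (dAdd_le_iff (B0 j i) (hB j i).1 (x j) (x i)).1 (h2 j i)
  · intro h
    refine ⟨fun i j => ((Mlam_add_le_iff A0 A1 B0 B1 lam i j _ _).1 (h i j)).2.2.1,
      fun i j => ?_, fun i j => ?_, fun i j => ?_⟩
    · exact (dAdd_le_iff (B0 i j) (hB i j).1 (x i) (x j)).2
        ((Mlam_add_le_iff A0 A1 B0 B1 lam j i _ _).1 (h j i)).2.2.2
    · exact (le_shift_iff (A1 i j) lam (x j) (x i)).2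
        ((Mlam_add_le_iff A0 A1 B0 B1 lam i j _ _).1 (h i j)).2.1
    · exact (dAdd_le_iff' (B1 i j) (hB i j).2 lam (x i) (x j)).2
        ((Mlam_add_le_iff A0 A1 B0 B1 lam j i _ _).1 (h j i)).1

lemma noPos (M : Matrix (Fin n) (Fin n) EReal) (x : Fin n → ℝ)
    (h : ∀ i, mpVec M x i ≤ (x i : EReal)) : NoPosCircuit M := by
  have h' : ∀ i j, M i j + (x j : EReal) ≤ (x i : EReal) := fun i j =>
    le_trans (le_iSup (fun j => M i j + ((x j : ℝ) : EReal)) j) (h i)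
  intro r hr p hpath hcirc
  have key : ∀ t : Fin r, M (p t.castSucc) (p t.succ) =
      (((M (p t.castSucc) (p t.succ)).toReal : ℝ) : EReal) ∧
      (M (p t.castSucc) (p t.succ)).toReal ≤ x (p t.castSucc) - x (p t.succ) := by
    intro t
    have hb := hpath t
    have ht : M (p t.castSucc) (p t.succ) ≠ ⊤ := by
      intro habs
      have h2 := h' (p t.castSucc) (p t.succ)
      rw [habs, EReal.top_add_coe] at h2
      exact EReal.coe_ne_top _ (top_le_iff.1 h2)
    have heq := (EReal.coe_toReal ht hb).symm
    refine ⟨heq, ?_⟩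
    have h2 := h' (p t.castSucc) (p t.succ)
    rw [heq] at h2
    norm_cast at h2
    linarith
  have hpw : pathWeight M r p =
      ((∑ t : Fin r, (M (p t.castSucc) (p t.succ)).toReal : ℝ) : EReal) := by
    rw [pathWeight, Finset.sum_congr rfl (fun t _ => (key t).1)]
    exact (map_sum (⟨⟨Real.toEReal, EReal.coe_zero⟩, fun a b => EReal.coe_add a b⟩ : ℝ →+ EReal)
      (fun t : Fin r => (M (p t.castSucc) (p t.succ)).toReal) Finset.univ).symm
  rw [hpw]
  have hsum : ∑ t : Fin r, (M (p t.castSucc) (p t.succ)).toReal ≤ 0 := by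
    have hle : ∑ t : Fin r, (M (p t.castSucc) (p t.succ)).toReal ≤
        ∑ t : Fin r, (x (p t.castSucc) - x (p t.succ)) :=
      Finset.sum_le_sum fun t _ => (key t).2
    set g : ℕ → ℝ := fun m => if hm : m < r + 1 then x (p ⟨m, hm⟩) else 0 with hg
    have hterm : ∀ t : Fin r, x (p t.castSucc) - x (p t.succ) = g (t : ℕ) - g ((t : ℕ) + 1) := by
      intro t
      have h1 : (t : ℕ) < r + 1 := Nat.lt_succ_of_lt t.isLt
      have h2 : (t : ℕ) + 1 < r + 1 := Nat.succ_lt_succ t.isLt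
      simp only [hg, dif_pos h1, dif_pos h2]
      rfl
    have tele : ∑ t : Fin r, (x (p t.castSucc) - x (p t.succ)) = g 0 - g r := by
      rw [Finset.sum_congr rfl (fun t _ => hterm t)]
      exact (Fin.sum_univ_eq_sum_range (fun m => g m - g (m + 1)) r).trans
        (Finset.sum_range_sub' g r)
    have hg0 : g 0 = x (p 0) := by simp [hg]
    have hgr : g r = x (p (Fin.last r)) := by
      simp only [hg, dif_pos (Nat.lt_succ_self r)]
      rfl
    rw [tele, hg0, hgr, hcirc] at hle
    linarith
  exact_mod_cast hsum

lemma traj_iff (A0 A1 B0 B1 : Matrix (Fin n) (Fin n) EReal)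
    (hB : ∀ i j, B0 i j ≠ ⊥ ∧ B1 i j ≠ ⊥) (lam : ℝ) :
    (∃ x0 : Fin n → ℝ, SatLDI A0 A1 B0 B1 (fun k i => (k : ℝ) * lam + x0 i)) ↔
      (∃ x : Fin n → ℝ,
        (∀ i, mpVec A0 x i ≤ (x i : EReal)) ∧
        (∀ i, (x i : EReal) ≤ dpVec B0 x i) ∧
        (∀ i, mpVec A1 x i ≤ ((lam + x i : ℝ) : EReal)) ∧
        (∀ i, ((lam + x i : ℝ) : EReal) ≤ dpVec B1 x i)) := by
  constructor
  · rintro ⟨x0, hx⟩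
    obtain ⟨h1, h2, h3, h4⟩ := hx 0
    simp only [Nat.cast_zero, zero_mul, zero_add, Nat.cast_one, one_mul, Nat.cast_ofNat,
      Nat.zero_add, Nat.cast_succ] at h1 h2 h3 h4
    exact ⟨x0, h1, h2, h3, h4⟩
  · rintro ⟨x, h1, h2, h3, h4⟩
    have e1 : ∀ i j, A0 i j + ((x j : ℝ) : EReal) ≤ ((x i : ℝ) : EReal) := fun i j =>
      le_trans (le_iSup (fun j => A0 i j + ((x j : ℝ) : EReal)) j) (h1 i)
    have e2 : ∀ i j, ((x i : ℝ) : EReal) ≤ dAdd (B0 i j) ((x j : ℝ) : EReal) := fun i j =>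
      le_trans (h2 i) (iInf_le (fun j => dAdd (B0 i j) ((x j : ℝ) : EReal)) j)
    have e3 : ∀ i j, A1 i j + ((x j : ℝ) : EReal) ≤ ((lam + x i : ℝ) : EReal) := fun i j =>
      le_trans (le_iSup (fun j => A1 i j + ((x j : ℝ) : EReal)) j) (h3 i)
    have e4 : ∀ i j, ((lam + x i : ℝ) : EReal) ≤ dAdd (B1 i j) ((x j : ℝ) : EReal) := fun i j =>
      le_trans (h4 i) (iInf_le (fun j => dAdd (B1 i j) ((x j : ℝ) : EReal)) j)
    refine ⟨x, fun k => ?_⟩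
    have hre : ∀ i : Fin n, ((k + 1 : ℕ) : ℝ) * lam + x i = (k : ℝ) * lam + (lam + x i) := by
      intro i; push_cast; ring
    refine ⟨fun i => iSup_le fun j => ?_, fun i => le_iInf fun j => ?_,
      fun i => ?_, fun i => ?_⟩
    · exact (shift_iff (A0 i j) ((k : ℝ) * lam) (x j) (x i)).2 (e1 i j)
    · exact (dshift_iff (B0 i j) (hB i j).1 ((k : ℝ) * lam) (x i) (x j)).2 (e2 i j)
    · show mpVec A1 _ i ≤ (((k + 1 : ℕ) : ℝ) * lam + x i : ℝ)
      rw [hre i]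
      exact iSup_le fun j => (shift_iff (A1 i j) ((k : ℝ) * lam) (x j) (lam + x i)).2 (e3 i j)
    · show (((((k + 1 : ℕ) : ℝ)) * lam + x i : ℝ) : EReal) ≤ dpVec B1 _ i
      rw [hre i]
      exact le_iInf fun j => (dshift_iff (B1 i j) (hB i j).2 ((k : ℝ) * lam) (lam + x i) (x j)).2 (e4 i j)

end PtegAux

/-- a P-TEG admits a consistent 1-periodic trajectory of period
`λ ≥ 0` iff there is `x ∈ ℝⁿ` with `A⁰⊗x ⪯ x`, `x ⪯ B⁰∧x`, `A¹⊗x ⪯ λ+x`,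
`λ+x ⪯ B¹∧x`, which holds iff the precedence graph of
`λ·B¹♯ ⊕ λ⁻¹·A¹ ⊕ (A⁰ ⊕ B⁰♯)` has no circuit of positive weight and admits a
finite potential. -/
theorem one_periodic_iff_static_iff_ncp {n : ℕ}
    (A0 A1 B0 B1 : Matrix (Fin n) (Fin n) EReal)
    (hA : ∀ i j, A0 i j ≠ ⊤ ∧ A1 i j ≠ ⊤) (hB : ∀ i j, B0 i j ≠ ⊥ ∧ B1 i j ≠ ⊥)
    (lam : ℝ) (hlam : 0 ≤ lam) :
    ((∃ x0 : Fin n → ℝ, SatLDI A0 A1 B0 B1 (fun k i => (k : ℝ) * lam + x0 i)) ↔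
      (∃ x : Fin n → ℝ,
        (∀ i, mpVec A0 x i ≤ (x i : EReal)) ∧
        (∀ i, (x i : EReal) ≤ dpVec B0 x i) ∧
        (∀ i, mpVec A1 x i ≤ ((lam + x i : ℝ) : EReal)) ∧
        (∀ i, ((lam + x i : ℝ) : EReal) ≤ dpVec B1 x i))) ∧
    ((∃ x : Fin n → ℝ,
        (∀ i, mpVec A0 x i ≤ (x i : EReal)) ∧
        (∀ i, (x i : EReal) ≤ dpVec B0 x i) ∧
        (∀ i, mpVec A1 x i ≤ ((lam + x i : ℝ) : EReal)) ∧
        (∀ i, ((lam + x i : ℝ) : EReal) ≤ dpVec B1 x i)) ↔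
      (NoPosCircuit (Mlam A0 A1 B0 B1 lam) ∧
        ∃ x : Fin n → ℝ, ∀ i, mpVec (Mlam A0 A1 B0 B1 lam) x i ≤ (x i : EReal))) := by
  constructor
  · exact PtegAux.traj_iff A0 A1 B0 B1 hB lam
  · constructor
    · rintro ⟨x, hx⟩
      have hE := (PtegAux.static_iff_E A0 A1 B0 B1 hB lam x).1 hx
      exact ⟨PtegAux.noPos _ x hE, x, hE⟩
    · rintro ⟨_, x, hx⟩
      exact ⟨x, (PtegAux.static_iff_E A0 A1 B0 B1 hB lam x).2 hx⟩
end
end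

section
/- In the max-plus algebra, if G(C) has no circuit of positive weight for C ∈ ℝmax^{n×n}, then for any P, I ∈ ℝmax^{n×n} and any λ ∈ ℝ, the graph G(λP ⊕ λ^{-1}I ⊕ C) has no positive circuit if and only if G(λ(C^*PC^*) ⊕ λ^{-1}(C^*IC^*) ⊕ E⊗) has no positive circuit, where E⊗ is the max-plus identity and C^* the Kleene star of C. -/
noncomputable section

/-- Max-plus matrix product. -/
def mpMul {ι κ τ : Type*} (A : Matrix ι κ EReal) (B : Matrix κ τ EReal) :
    Matrix ι τ EReal := fun i j => ⨆ k, A i k + B k j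

/-- Max-plus matrix power, with `A^0` the max-plus identity `E⊗`. -/
def mpPow {ι : Type*} [DecidableEq ι] (A : Matrix ι ι EReal) : ℕ → Matrix ι ι EReal
  | 0 => fun i j => if i = j then 0 else ⊥
  | k + 1 => mpMul (mpPow A k) A

/-- Kleene star `A^* = ⊕_{k ≥ 0} A^k`. -/
def mpStar {ι : Type*} [DecidableEq ι] (A : Matrix ι ι EReal) : Matrix ι ι EReal :=
  fun i j => ⨆ k : ℕ, mpPow A k i j

/-- The max-plus identity matrix `E⊗`. -/
def mpId (n : ℕ) : Matrix (Fin n) (Fin n) EReal := fun i j => if i = j then 0 else ⊥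

/-- `λ·M` : add the real scalar `λ` to every entry (`-∞` stays `-∞`). -/
def scalMul {ι κ : Type*} (lam : ℝ) (M : Matrix ι κ EReal) : Matrix ι κ EReal :=
  fun i j => (lam : EReal) + M i j

/-- Entrywise maximum `M ⊕ N`. -/
def matSup {ι κ : Type*} (M N : Matrix ι κ EReal) : Matrix ι κ EReal :=
  fun i j => M i j ⊔ N i j

/-! ### Auxiliary EReal lemmas -/

lemma ereal_add_iSup {ι : Sort*} (a : EReal) (f : ι → EReal) :
    a + ⨆ i, f i = ⨆ i, a + f i := by
  cases isEmpty_or_nonempty ι with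
  | inl h => simp [iSup_of_empty]
  | inr h =>
    refine le_antisymm ?_ (iSup_le fun i => add_le_add_right (le_iSup f i) a)
    induction a using EReal.rec with
    | bot => simp
    | coe x =>
      have h1 : ∀ i, f i ≤ (⨆ i, (x : EReal) + f i) - x := by
        intro i
        have : f i = ((x : EReal) + f i) - x := by
          rw [add_comm, EReal.add_sub_cancel_right]
        rw [this]
        exact EReal.sub_le_sub (le_iSup (fun i => (x : EReal) + f i) i) le_rfl
      calc (x : EReal) + ⨆ i, f i ≤ x + ((⨆ i, (x : EReal) + f i) - x) :=
            add_le_add_right (iSup_le h1) _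
        _ = _ := by rw [add_comm, EReal.sub_add_cancel]
    | top =>
      by_cases hb : ∀ i, f i = ⊥
      · simp [hb]
      · push_neg at hb
        obtain ⟨i, hi⟩ := hb
        refine le_top.trans ?_
        calc (⊤ : EReal) = ⊤ + f i := (EReal.top_add_of_ne_bot hi).symm
          _ ≤ ⨆ i, (⊤ : EReal) + f i := le_iSup (fun i => (⊤ : EReal) + f i) i

lemma ereal_iSup_add {ι : Sort*} (f : ι → EReal) (a : EReal) :
    (⨆ i, f i) + a = ⨆ i, f i + a := by
  rw [add_comm, ereal_add_iSup]
  exact iSup_congr fun i => add_comm _ _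

lemma ereal_sup_add (a b c : EReal) : (a ⊔ b) + c = (a + c) ⊔ (b + c) := by
  rcases le_total a b with h | h
  · rw [sup_eq_right.2 h, sup_eq_right.2 (add_le_add_left h c)]
  · rw [sup_eq_left.2 h, sup_eq_left.2 (add_le_add_left h c)]

lemma ereal_add_sup (a b c : EReal) : a + (b ⊔ c) = (a + b) ⊔ (a + c) := by
  rw [add_comm, ereal_sup_add, add_comm b a, add_comm c a]

/-! ### Matrix algebra lemmas -/

section MatrixAlg

variable {n : ℕ}

lemma mpPow_succ (A : Matrix (Fin n) (Fin n) EReal) (k : ℕ) :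
    mpPow A (k + 1) = mpMul (mpPow A k) A := rfl

lemma mpMul_mono {A A' B B' : Matrix (Fin n) (Fin n) EReal}
    (hA : ∀ i j, A i j ≤ A' i j) (hB : ∀ i j, B i j ≤ B' i j) :
    ∀ i j, mpMul A B i j ≤ mpMul A' B' i j :=
  fun i j => iSup_mono fun k => add_le_add (hA i k) (hB k j)

lemma mpPow_mono {A B : Matrix (Fin n) (Fin n) EReal}
    (hAB : ∀ i j, A i j ≤ B i j) (k : ℕ) :
    ∀ i j, mpPow A k i j ≤ mpPow B k i j := by
  induction k with
  | zero => exact fun i j => le_rfl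
  | succ k ih => exact mpMul_mono ih hAB

lemma mpMul_assoc (A B C : Matrix (Fin n) (Fin n) EReal) :
    mpMul (mpMul A B) C = mpMul A (mpMul B C) := by
  funext i j
  show (⨆ k, (⨆ l, A i l + B l k) + C k j) = ⨆ l, A i l + ⨆ k, B l k + C k j
  simp only [ereal_iSup_add, ereal_add_iSup]
  rw [iSup_comm]
  exact iSup_congr fun l => iSup_congr fun k => add_assoc _ _ _

lemma mpId_mul (B : Matrix (Fin n) (Fin n) EReal) : mpMul (mpId n) B = B := by
  funext i j
  refine le_antisymm (iSup_le fun k => ?_) ?_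
  · by_cases h : i = k
    · subst h; simp [mpId]
    · simp [mpId, h]
  · have h := le_iSup (fun k => mpId n i k + B k j) i
    simpa [mpId, mpMul] using h

lemma mpMul_id (A : Matrix (Fin n) (Fin n) EReal) : mpMul A (mpId n) = A := by
  funext i j
  refine le_antisymm (iSup_le fun k => ?_) ?_
  · by_cases h : k = j
    · subst h; simp [mpId]
    · simp [mpId, h]
  · have h := le_iSup (fun k => A i k + mpId n k j) j
    simpa [mpId, mpMul] using h

lemma mpPow_zero (A : Matrix (Fin n) (Fin n) EReal) : mpPow A 0 = mpId n := rfl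

lemma mpPow_add (A : Matrix (Fin n) (Fin n) EReal) (a b : ℕ) :
    mpPow A (a + b) = mpMul (mpPow A a) (mpPow A b) := by
  induction b with
  | zero => rw [Nat.add_zero, mpPow_zero, mpMul_id]
  | succ b ih =>
    rw [← Nat.add_assoc, mpPow_succ, ih, mpPow_succ, mpMul_assoc]

lemma mpMul_matSup_left (A B X : Matrix (Fin n) (Fin n) EReal) :
    mpMul (matSup A B) X = matSup (mpMul A X) (mpMul B X) := by
  funext i j
  show (⨆ k, (A i k ⊔ B i k) + X k j) = (⨆ k, A i k + X k j) ⊔ ⨆ k, B i k + X k j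
  simp only [ereal_sup_add]
  exact iSup_sup_eq

lemma mpMul_matSup_right (X A B : Matrix (Fin n) (Fin n) EReal) :
    mpMul X (matSup A B) = matSup (mpMul X A) (mpMul X B) := by
  funext i j
  show (⨆ k, X i k + (A k j ⊔ B k j)) = (⨆ k, X i k + A k j) ⊔ ⨆ k, X i k + B k j
  simp only [ereal_add_sup]
  exact iSup_sup_eq

lemma scalMul_mpMul_left (lam : ℝ) (A B : Matrix (Fin n) (Fin n) EReal) :
    scalMul lam (mpMul A B) = mpMul (scalMul lam A) B := by
  funext i j
  show (lam : EReal) + (⨆ k, A i k + B k j) = ⨆ k, ((lam : EReal) + A i k) + B k j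
  rw [ereal_add_iSup]
  exact iSup_congr fun k => (add_assoc _ _ _).symm

lemma scalMul_mpMul_right (lam : ℝ) (A B : Matrix (Fin n) (Fin n) EReal) :
    scalMul lam (mpMul A B) = mpMul A (scalMul lam B) := by
  funext i j
  show (lam : EReal) + (⨆ k, A i k + B k j) = ⨆ k, A i k + ((lam : EReal) + B k j)
  rw [ereal_add_iSup]
  exact iSup_congr fun k => add_left_comm _ _ _

lemma mpMul_iSup_left (F : ℕ → Matrix (Fin n) (Fin n) EReal)
    (B : Matrix (Fin n) (Fin n) EReal) :
    mpMul (fun a b => ⨆ k, F k a b) B = fun i j => ⨆ k, mpMul (F k) B i j := by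
  funext i j
  show (⨆ l, (⨆ k, F k i l) + B l j) = ⨆ k, ⨆ l, F k i l + B l j
  rw [iSup_comm]
  exact iSup_congr fun l => ereal_iSup_add _ _

lemma mpMul_iSup_right (A : Matrix (Fin n) (Fin n) EReal)
    (F : ℕ → Matrix (Fin n) (Fin n) EReal) :
    mpMul A (fun a b => ⨆ k, F k a b) = fun i j => ⨆ k, mpMul A (F k) i j := by
  funext i j
  show (⨆ l, A i l + ⨆ k, F k l j) = ⨆ k, ⨆ l, A i l + F k l j
  rw [iSup_comm]
  exact iSup_congr fun l => ereal_add_iSup _ _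

lemma mpStar_def (A : Matrix (Fin n) (Fin n) EReal) :
    mpStar A = fun i j => ⨆ k, mpPow A k i j := rfl

end MatrixAlg

/-! ### Bridge: circuits vs diagonal entries of powers -/

section Bridge

variable {n : ℕ}

lemma pathWeight_le_pow (M : Matrix (Fin n) (Fin n) EReal) :
    ∀ (r : ℕ) (p : Fin (r + 1) → Fin n),
      pathWeight M r p ≤ mpPow M r (p 0) (p (Fin.last r)) := by
  intro r
  induction r with
  | zero =>
    intro p
    have : pathWeight M 0 p = 0 := by
      unfold pathWeight; simp
    rw [this]
    have : p (Fin.last 0) = p 0 := rfl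
    rw [this]
    simp [mpPow]
  | succ r ih =>
    intro p
    have hq := ih (fun t => p t.castSucc)
    have hsplit : pathWeight M (r + 1) p
        = pathWeight M r (fun t => p t.castSucc)
          + M (p (Fin.last r).castSucc) (p (Fin.last (r + 1))) := by
      unfold pathWeight
      rw [Fin.sum_univ_castSucc, Fin.succ_last]
      simp only [Fin.succ_castSucc]
    rw [hsplit]
    have h0 : (fun t : Fin (r + 1) => p t.castSucc) 0 = p 0 := by
      simp
    have hl : (fun t : Fin (r + 1) => p t.castSucc) (Fin.last r) = p (Fin.last r).castSucc := rfl
    calc pathWeight M r (fun t => p t.castSucc)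
          + M (p (Fin.last r).castSucc) (p (Fin.last (r + 1)))
        ≤ mpPow M r (p 0) (p (Fin.last r).castSucc)
          + M (p (Fin.last r).castSucc) (p (Fin.last (r + 1))) := by
          refine add_le_add_left ?_ _
          rw [← h0]
          exact hq
      _ ≤ mpPow M (r + 1) (p 0) (p (Fin.last (r + 1))) :=
          le_iSup (fun k => mpPow M r (p 0) k + M k (p (Fin.last (r + 1)))) _

lemma pow_attained (M : Matrix (Fin n) (Fin n) EReal) :
    ∀ (r : ℕ) (i j : Fin n),
      mpPow M r i j = ⊥ ∨
        ∃ p : Fin (r + 1) → Fin n, p 0 = i ∧ p (Fin.last r) = j ∧ IsPath M r p ∧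
          pathWeight M r p = mpPow M r i j := by
  intro r
  induction r with
  | zero =>
    intro i j
    by_cases h : i = j
    · subst h
      right
      refine ⟨fun _ => i, rfl, rfl, fun t => t.elim0, ?_⟩
      unfold pathWeight
      simp [mpPow]
    · left; simp [mpPow, h]
  | succ r ih =>
    intro i j
    have : Nonempty (Fin n) := ⟨i⟩
    obtain ⟨k0, hmax⟩ := Finite.exists_max (fun k => mpPow M r i k + M k j)
    have hk0 : mpPow M (r + 1) i j = mpPow M r i k0 + M k0 j :=
      le_antisymm (iSup_le fun k => hmax k)
        (le_iSup (fun k => mpPow M r i k + M k j) k0)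
    by_cases hb : mpPow M r i k0 + M k0 j = ⊥
    · left; rw [hk0, hb]
    · right
      have hM : M k0 j ≠ ⊥ := fun h => hb (by rw [h, EReal.add_bot])
      have hpr : mpPow M r i k0 ≠ ⊥ := fun h => hb (by rw [h, EReal.bot_add])
      rcases ih i k0 with h | ⟨p, hp0, hpl, hpath, hw⟩
      · exact absurd h hpr
      refine ⟨Fin.snoc p j, ?_, ?_, ?_, ?_⟩
      · rw [show (0 : Fin (r + 2)) = (0 : Fin (r + 1)).castSucc from rfl,
          Fin.snoc_castSucc]
        exact hp0
      · rw [Fin.snoc_last]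
      · intro t
        refine Fin.lastCases ?_ (fun s => ?_) t
        · rw [Fin.succ_last, Fin.snoc_last, Fin.snoc_castSucc, hpl]
          exact hM
        · rw [Fin.succ_castSucc, Fin.snoc_castSucc, Fin.snoc_castSucc]
          exact hpath s
      · have hsum : pathWeight M (r + 1) (Fin.snoc p j) = pathWeight M r p + M k0 j := by
          unfold pathWeight
          rw [Fin.sum_univ_castSucc]
          congr 1
          · refine Finset.sum_congr rfl fun s _ => ?_
            rw [Fin.succ_castSucc, Fin.snoc_castSucc, Fin.snoc_castSucc]
          · rw [Fin.succ_last, Fin.snoc_last, Fin.snoc_castSucc, hpl]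
        rw [hsum, hw, hk0]

lemma noPosCircuit_iff_pow (M : Matrix (Fin n) (Fin n) EReal) :
    NoPosCircuit M ↔ ∀ r : ℕ, 1 ≤ r → ∀ i, mpPow M r i i ≤ 0 := by
  constructor
  · intro h r hr i
    rcases pow_attained M r i i with hb | ⟨p, hp0, hpl, hpath, hw⟩
    · rw [hb]; exact bot_le
    · rw [← hw]; exact h r hr p hpath (hp0.trans hpl.symm)
  · intro h r hr p hpath hcirc
    calc pathWeight M r p ≤ mpPow M r (p 0) (p (Fin.last r)) := pathWeight_le_pow M r p
      _ = mpPow M r (p 0) (p 0) := by rw [← hcirc]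
      _ ≤ 0 := h r hr (p 0)

end Bridge

/-! ### Plus-closure and star lemmas -/

section Algebra

variable {n : ℕ}

lemma matSup_apply (A B : Matrix (Fin n) (Fin n) EReal) (i j : Fin n) :
    matSup A B i j = A i j ⊔ B i j := rfl

lemma scalMul_apply (lam : ℝ) (A : Matrix (Fin n) (Fin n) EReal) (i j : Fin n) :
    scalMul lam A i j = (lam : EReal) + A i j := rfl

/-- `A⁺ = ⊕_{k ≥ 1} A^k`. -/
def mpPlus (A : Matrix (Fin n) (Fin n) EReal) : Matrix (Fin n) (Fin n) EReal :=
  fun i j => ⨆ k, mpPow A (k + 1) i j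

lemma mpPlus_apply (A : Matrix (Fin n) (Fin n) EReal) (i j : Fin n) :
    mpPlus A i j = ⨆ k, mpPow A (k + 1) i j := rfl

lemma mpPow_one (A : Matrix (Fin n) (Fin n) EReal) : mpPow A 1 = A := by
  rw [mpPow_succ, mpPow_zero, mpId_mul]

lemma le_mpPlus (A : Matrix (Fin n) (Fin n) EReal) : ∀ i j, A i j ≤ mpPlus A i j := by
  intro i j
  have h := le_iSup (fun k => mpPow A (k + 1) i j) 0
  rwa [mpPow_one] at h

lemma mpPlus_mul_self (A : Matrix (Fin n) (Fin n) EReal) :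
    ∀ i j, mpMul (mpPlus A) A i j ≤ mpPlus A i j := by
  have e : mpMul (mpPlus A) A = fun i j => ⨆ k, mpMul (mpPow A (k + 1)) A i j :=
    mpMul_iSup_left _ _
  intro i j
  rw [e]
  refine iSup_le fun k => ?_
  rw [← mpPow_succ]
  exact le_iSup (fun m => mpPow A (m + 1) i j) (k + 1)

lemma mpPlus_mul_absorb (A X : Matrix (Fin n) (Fin n) EReal)
    (h : ∀ i j, mpMul A X i j ≤ A i j) :
    ∀ i j, mpMul (mpPlus A) X i j ≤ mpPlus A i j := by
  have e : mpMul (mpPlus A) X = fun i j => ⨆ k, mpMul (mpPow A (k + 1)) X i j :=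
    mpMul_iSup_left _ _
  intro i j
  rw [e]
  refine iSup_le fun k => ?_
  have hk : ∀ a b, mpMul (mpPow A (k + 1)) X a b ≤ mpPow A (k + 1) a b := by
    intro a b
    have e2 : mpMul (mpPow A (k + 1)) X = mpMul (mpPow A k) (mpMul A X) := by
      rw [mpPow_succ, mpMul_assoc]
    rw [e2]
    calc mpMul (mpPow A k) (mpMul A X) a b ≤ mpMul (mpPow A k) A a b :=
          mpMul_mono (fun _ _ => le_rfl) h a b
      _ = mpPow A (k + 1) a b := by rw [← mpPow_succ]
  exact (hk i j).trans (le_iSup (fun m => mpPow A (m + 1) i j) k)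

lemma mpPlus_mul_mpPlus (A : Matrix (Fin n) (Fin n) EReal) :
    ∀ i j, mpMul (mpPlus A) (mpPlus A) i j ≤ mpPlus A i j := by
  have e : mpMul (mpPlus A) (mpPlus A)
      = fun i j => ⨆ b, mpMul (mpPlus A) (mpPow A (b + 1)) i j := mpMul_iSup_right _ _
  intro i j
  rw [e]
  refine iSup_le fun b => ?_
  have e2 : mpMul (mpPlus A) (mpPow A (b + 1))
      = fun i j => ⨆ a, mpMul (mpPow A (a + 1)) (mpPow A (b + 1)) i j := mpMul_iSup_left _ _
  rw [e2]
  refine iSup_le fun a => ?_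
  rw [← mpPow_add]
  have h : (a + 1) + (b + 1) = (a + b + 1) + 1 := by omega
  rw [h]
  exact le_iSup (fun m => mpPow A (m + 1) i j) (a + b + 1)

lemma mpPow_mpPlus_le (A : Matrix (Fin n) (Fin n) EReal) (k : ℕ) :
    ∀ i j, mpPow (mpPlus A) (k + 1) i j ≤ mpPlus A i j := by
  induction k with
  | zero => intro i j; rw [mpPow_one]
  | succ k ih =>
    intro i j
    rw [mpPow_succ]
    calc mpMul (mpPow (mpPlus A) (k + 1)) (mpPlus A) i j
        ≤ mpMul (mpPlus A) (mpPlus A) i j := mpMul_mono ih (fun _ _ => le_rfl) i j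
      _ ≤ _ := mpPlus_mul_mpPlus A i j

lemma pow_mul_star_le (C : Matrix (Fin n) (Fin n) EReal) (r : ℕ) :
    ∀ i j, mpMul (mpPow C r) (mpStar C) i j ≤ mpStar C i j := by
  have e : mpMul (mpPow C r) (mpStar C)
      = fun i j => ⨆ k, mpMul (mpPow C r) (mpPow C k) i j := mpMul_iSup_right _ _
  intro i j
  rw [e]
  refine iSup_le fun k => ?_
  rw [← mpPow_add]
  exact le_iSup (fun m => mpPow C m i j) (r + k)

lemma star_mul_pow_le (C : Matrix (Fin n) (Fin n) EReal) (r : ℕ) :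
    ∀ i j, mpMul (mpStar C) (mpPow C r) i j ≤ mpStar C i j := by
  have e : mpMul (mpStar C) (mpPow C r)
      = fun i j => ⨆ k, mpMul (mpPow C k) (mpPow C r) i j := mpMul_iSup_left _ _
  intro i j
  rw [e]
  refine iSup_le fun k => ?_
  rw [← mpPow_add]
  exact le_iSup (fun m => mpPow C m i j) (k + r)

lemma star_mul_star_sandwich (C M : Matrix (Fin n) (Fin n) EReal)
    (hCM : ∀ i j, C i j ≤ M i j) :
    ∀ i j, mpMul (mpMul (mpStar C) M) (mpStar C) i j ≤ mpPlus M i j := by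
  have e2 : mpMul (mpMul (mpStar C) M) (mpStar C)
      = fun i j => ⨆ b, mpMul (mpMul (mpStar C) M) (mpPow C b) i j := mpMul_iSup_right _ _
  intro i j
  rw [e2]
  refine iSup_le fun b => ?_
  have e1 : mpMul (mpStar C) M = fun a c => ⨆ k, mpMul (mpPow C k) M a c :=
    mpMul_iSup_left _ _
  have e3 : mpMul (mpMul (mpStar C) M) (mpPow C b)
      = fun i j => ⨆ a, mpMul (mpMul (mpPow C a) M) (mpPow C b) i j := by
    rw [e1]; exact mpMul_iSup_left _ _
  rw [e3]
  refine iSup_le fun a => ?_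
  calc mpMul (mpMul (mpPow C a) M) (mpPow C b) i j
      ≤ mpMul (mpMul (mpPow M a) M) (mpPow M b) i j :=
        mpMul_mono (mpMul_mono (mpPow_mono hCM a) (fun _ _ => le_rfl)) (mpPow_mono hCM b) i j
    _ = mpPow M (a + 1 + b) i j := by rw [← mpPow_succ, ← mpPow_add]
    _ ≤ mpPlus M i j := by
        have h : a + 1 + b = (a + b) + 1 := by omega
        rw [h]
        exact le_iSup (fun m => mpPow M (m + 1) i j) (a + b)

lemma pow_matSup_id_le (G : Matrix (Fin n) (Fin n) EReal) :
    ∀ (r : ℕ) (i j : Fin n),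
      mpPow (matSup (mpId n) G) r i j ≤ matSup (mpId n) (mpPlus G) i j := by
  intro r
  induction r with
  | zero =>
    intro i j
    show mpId n i j ≤ mpId n i j ⊔ mpPlus G i j
    exact le_sup_left
  | succ r ih =>
    intro i j
    rw [mpPow_succ]
    calc mpMul (mpPow (matSup (mpId n) G) r) (matSup (mpId n) G) i j
        ≤ mpMul (matSup (mpId n) (mpPlus G)) (matSup (mpId n) G) i j :=
          mpMul_mono ih (fun _ _ => le_rfl) i j
      _ ≤ matSup (mpId n) (mpPlus G) i j := by
          rw [mpMul_matSup_left, mpId_mul, mpMul_matSup_right, mpMul_id]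
          show (mpId n i j ⊔ G i j) ⊔ (mpPlus G i j ⊔ mpMul (mpPlus G) G i j)
              ≤ mpId n i j ⊔ mpPlus G i j
          exact sup_le (sup_le le_sup_left (le_sup_of_le_right (le_mpPlus G i j)))
            (sup_le le_sup_right (le_sup_of_le_right (mpPlus_mul_self G i j)))

lemma pow_matSup_CD_le (C D : Matrix (Fin n) (Fin n) EReal)
    (hDC : ∀ i j, mpMul D C i j ≤ D i j)
    (hCD : ∀ (s : ℕ) (i j : Fin n), mpMul (mpPow C s) D i j ≤ D i j) :
    ∀ (r : ℕ) (i j : Fin n),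
      mpPow (matSup C D) r i j ≤ matSup (mpPow C r) (mpPlus D) i j := by
  intro r
  induction r with
  | zero =>
    intro i j
    show mpId n i j ≤ mpId n i j ⊔ mpPlus D i j
    exact le_sup_left
  | succ r ih =>
    intro i j
    rw [mpPow_succ]
    calc mpMul (mpPow (matSup C D) r) (matSup C D) i j
        ≤ mpMul (matSup (mpPow C r) (mpPlus D)) (matSup C D) i j :=
          mpMul_mono ih (fun _ _ => le_rfl) i j
      _ ≤ matSup (mpPow C (r + 1)) (mpPlus D) i j := by
          rw [mpMul_matSup_left, mpMul_matSup_right, mpMul_matSup_right]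
          show (mpMul (mpPow C r) C i j ⊔ mpMul (mpPow C r) D i j)
                ⊔ (mpMul (mpPlus D) C i j ⊔ mpMul (mpPlus D) D i j)
              ≤ mpPow C (r + 1) i j ⊔ mpPlus D i j
          refine sup_le (sup_le ?_ ?_) (sup_le ?_ ?_)
          · exact le_sup_of_le_left (le_of_eq (by rw [mpPow_succ]))
          · exact le_sup_of_le_right ((hCD r i j).trans (le_mpPlus D i j))
          · exact le_sup_of_le_right (mpPlus_mul_absorb D C hDC i j)
          · exact le_sup_of_le_right (mpPlus_mul_self D i j)

end Algebra

/-- if `G(C)` has no positive circuit then, for any `P, I` and any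
real `λ`, `G(λP ⊕ λ⁻¹I ⊕ C)` has no positive circuit iff
`G(λ(C^*PC^*) ⊕ λ⁻¹(C^*IC^*) ⊕ E⊗)` has no positive circuit. -/
theorem preprocessing_correct {n : ℕ} (P I C : Matrix (Fin n) (Fin n) EReal)
    (hP : ∀ a b, P a b ≠ ⊤) (hI : ∀ a b, I a b ≠ ⊤) (hC : ∀ a b, C a b ≠ ⊤)
    (hCnc : NoPosCircuit C) (lam : ℝ) :
    NoPosCircuit (matSup (scalMul lam P) (matSup (scalMul (-lam) I) C)) ↔
      NoPosCircuit (matSup (scalMul lam (mpMul (mpMul (mpStar C) P) (mpStar C)))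
        (matSup (scalMul (-lam) (mpMul (mpMul (mpStar C) I) (mpStar C))) (mpId n))) := by
  have hC' : ∀ r, 1 ≤ r → ∀ i, mpPow C r i i ≤ 0 := (noPosCircuit_iff_pow C).1 hCnc
  rw [noPosCircuit_iff_pow, noPosCircuit_iff_pow]
  set Pb := mpMul (mpMul (mpStar C) P) (mpStar C) with hPb
  set Ib := mpMul (mpMul (mpStar C) I) (mpStar C) with hIb
  set M := matSup (scalMul lam P) (matSup (scalMul (-lam) I) C) with hMdef
  set N := matSup (scalMul lam Pb) (matSup (scalMul (-lam) Ib) (mpId n)) with hNdef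
  constructor
  · -- `M` has no positive circuit → `N` has no positive circuit
    intro hM r hr i
    set G := mpMul (mpMul (mpStar C) M) (mpStar C) with hG
    have hMpdiag : ∀ i, mpPlus M i i ≤ 0 := fun i =>
      iSup_le fun k => hM (k + 1) (Nat.succ_le_succ (Nat.zero_le k)) i
    have hCM : ∀ a b, C a b ≤ M a b := by
      intro a b
      rw [hMdef]
      simp only [matSup_apply]
      exact le_sup_of_le_right le_sup_right
    have hGMp : ∀ a b, G a b ≤ mpPlus M a b := star_mul_star_sandwich C M hCM
    have hNle : ∀ a b, N a b ≤ matSup (mpId n) G a b := by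
      intro a b
      have h1 : ∀ a b, scalMul lam Pb a b ≤ G a b := by
        have e : scalMul lam Pb = mpMul (mpMul (mpStar C) (scalMul lam P)) (mpStar C) := by
          rw [hPb, scalMul_mpMul_left, scalMul_mpMul_right]
        intro a b
        rw [e, hG]
        refine mpMul_mono (mpMul_mono (fun _ _ => le_rfl) ?_) (fun _ _ => le_rfl) a b
        intro a b
        rw [hMdef]
        simp only [matSup_apply]
        exact le_sup_left
      have h2 : ∀ a b, scalMul (-lam) Ib a b ≤ G a b := by
        have e : scalMul (-lam) Ib = mpMul (mpMul (mpStar C) (scalMul (-lam) I)) (mpStar C) := by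
          rw [hIb, scalMul_mpMul_left, scalMul_mpMul_right]
        intro a b
        rw [e, hG]
        refine mpMul_mono (mpMul_mono (fun _ _ => le_rfl) ?_) (fun _ _ => le_rfl) a b
        intro a b
        rw [hMdef]
        simp only [matSup_apply]
        exact le_sup_of_le_right le_sup_left
      rw [hNdef]
      simp only [matSup_apply]
      exact sup_le ((h1 a b).trans le_sup_right)
        (sup_le ((h2 a b).trans le_sup_right) le_sup_left)
    calc mpPow N r i i ≤ mpPow (matSup (mpId n) G) r i i := mpPow_mono hNle r i i
      _ ≤ matSup (mpId n) (mpPlus G) i i := pow_matSup_id_le G r i i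
      _ ≤ 0 := by
          simp only [matSup_apply]
          refine sup_le ?_ ?_
          · simp [mpId]
          · simp only [mpPlus_apply]
            refine iSup_le fun k => ?_
            calc mpPow G (k + 1) i i ≤ mpPow (mpPlus M) (k + 1) i i :=
                  mpPow_mono hGMp (k + 1) i i
              _ ≤ mpPlus M i i := mpPow_mpPlus_le M k i i
              _ ≤ 0 := hMpdiag i
  · -- `N` has no positive circuit → `M` has no positive circuit
    intro hN r hr i
    set D := matSup (scalMul lam Pb) (scalMul (-lam) Ib) with hD
    have hDN : ∀ a b, D a b ≤ N a b := by
      intro a b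
      rw [hD, hNdef]
      simp only [matSup_apply]
      exact sup_le le_sup_left (le_sup_of_le_right le_sup_left)
    have hCD : ∀ (s : ℕ) (a b : Fin n), mpMul (mpPow C s) D a b ≤ D a b := by
      intro s a b
      rw [hD, mpMul_matSup_right]
      simp only [matSup_apply]
      refine sup_le_sup ?_ ?_
      · rw [← scalMul_mpMul_right]
        simp only [scalMul_apply]
        refine add_le_add_right ?_ _
        rw [hPb, ← mpMul_assoc, ← mpMul_assoc]
        exact mpMul_mono (mpMul_mono (pow_mul_star_le C s) (fun _ _ => le_rfl))
          (fun _ _ => le_rfl) a b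
      · rw [← scalMul_mpMul_right]
        simp only [scalMul_apply]
        refine add_le_add_right ?_ _
        rw [hIb, ← mpMul_assoc, ← mpMul_assoc]
        exact mpMul_mono (mpMul_mono (pow_mul_star_le C s) (fun _ _ => le_rfl))
          (fun _ _ => le_rfl) a b
    have hCsC : ∀ a b, mpMul (mpStar C) C a b ≤ mpStar C a b := by
      intro a b
      have h1 := star_mul_pow_le C 1 a b
      rwa [mpPow_one] at h1
    have hDC : ∀ a b, mpMul D C a b ≤ D a b := by
      intro a b
      rw [hD, mpMul_matSup_left]
      simp only [matSup_apply]
      refine sup_le_sup ?_ ?_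
      · rw [← scalMul_mpMul_left]
        simp only [scalMul_apply]
        refine add_le_add_right ?_ _
        rw [hPb, mpMul_assoc]
        exact mpMul_mono (fun _ _ => le_rfl) hCsC a b
      · rw [← scalMul_mpMul_left]
        simp only [scalMul_apply]
        refine add_le_add_right ?_ _
        rw [hIb, mpMul_assoc]
        exact mpMul_mono (fun _ _ => le_rfl) hCsC a b
    have hIdCs : ∀ a b, mpId n a b ≤ mpStar C a b := fun a b =>
      le_iSup (fun k => mpPow C k a b) 0
    have hPPb : ∀ a b, P a b ≤ Pb a b := by
      intro a b
      have e : mpMul (mpMul (mpId n) P) (mpId n) = P := by rw [mpId_mul, mpMul_id]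
      calc P a b = mpMul (mpMul (mpId n) P) (mpId n) a b := by rw [e]
        _ ≤ Pb a b := by
            rw [hPb]
            exact mpMul_mono (mpMul_mono hIdCs (fun _ _ => le_rfl)) hIdCs a b
    have hIIb : ∀ a b, I a b ≤ Ib a b := by
      intro a b
      have e : mpMul (mpMul (mpId n) I) (mpId n) = I := by rw [mpId_mul, mpMul_id]
      calc I a b = mpMul (mpMul (mpId n) I) (mpId n) a b := by rw [e]
        _ ≤ Ib a b := by
            rw [hIb]
            exact mpMul_mono (mpMul_mono hIdCs (fun _ _ => le_rfl)) hIdCs a b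
    have hMCD : ∀ a b, M a b ≤ matSup C D a b := by
      intro a b
      rw [hMdef, hD]
      simp only [matSup_apply, scalMul_apply]
      refine sup_le ?_ (sup_le ?_ le_sup_left)
      · exact le_sup_of_le_right (le_sup_of_le_left (add_le_add_right (hPPb a b) _))
      · exact le_sup_of_le_right (le_sup_of_le_right (add_le_add_right (hIIb a b) _))
    calc mpPow M r i i ≤ mpPow (matSup C D) r i i := mpPow_mono hMCD r i i
      _ ≤ matSup (mpPow C r) (mpPlus D) i i := pow_matSup_CD_le C D hDC hCD r i i
      _ ≤ 0 := by
          simp only [matSup_apply, mpPlus_apply]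
          refine sup_le (hC' r hr i) (iSup_le fun k => ?_)
          exact (mpPow_mono hDN (k + 1) i i).trans
            (hN (k + 1) (Nat.succ_le_succ (Nat.zero_le k)) i)
end
end
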